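/- In the reduction from Diverse Knapsack to λ-Median Utilitarian Knapsack that adds λ−1 new items P_new, each of cost 1, with utilities strictly greater than any original item's utility for every voter, and sets budget b' = b + λ − 1: the original instance admits a bundle S ⊆ P of cost at most b with ∑_{v∈V} max_{p∈S} util_v(p) ≥ u_tgt (u_tgt > 0) if and only if the new instance admits a bundle S' ⊆ P ∪ P_new of cost at most b' with ∑_{v∈V} sat_v^λ(S') ≥ u_tgt. -/

import Mathlib

/-- λ-median satisfaction: the λ-th largest utility among items of `Z`, `0` if `|Z| < λ`. -/
def medSat {Q : Type*} (util : Q → ℕ) (lam : ℕ) (Z : Finset Q) : ℕ :=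
  if 1 ≤ lam ∧ lam ≤ Z.card then ((Z.val.map util).sort (· ≤ ·)).getD (Z.card - lam) 0
  else 0

private lemma sorted_getD_le_iff :
    ∀ (L : List ℕ), L.Pairwise (· ≤ ·) → ∀ i, i < L.length → ∀ a : ℕ,
      (a ≤ L.getD i 0 ↔ L.length - i ≤ L.countP (fun x => a ≤ x)) := by
  intro L
  induction L with
  | nil => intro _ i hi; simp at hi
  | cons x xs ih =>
    intro hs i hi a
    rw [List.pairwise_cons] at hs
    match i with
    | 0 =>
      simp only [List.getD_cons_zero, List.length_cons, Nat.sub_zero, List.countP_cons]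
      constructor
      · intro hax
        have : xs.countP (fun y => a ≤ y) = xs.length := by
          rw [List.countP_eq_length]
          intro y hy
          simpa using hax.trans (hs.1 y hy)
        simp [this, hax]
      · intro h
        by_contra hax
        simp only [List.countP_eq_length_filter] at h ⊢
        have hle := List.length_filter_le (fun y => decide (a ≤ y)) xs
        simp [hax] at h
        have := List.countP_le_length (l := xs) (p := fun y => decide (a ≤ y))
        omega
    | i + 1 =>
      have hi' : i < xs.length := by simpa using hi
      have := ih hs.2 i hi' a
      simp only [List.getD_cons_succ, List.length_cons, Nat.succ_sub_succ, List.countP_cons]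
      rw [this]
      constructor
      · intro h; omega
      · intro h
        by_cases hax : a ≤ x
        · have : xs.countP (fun y => a ≤ y) = xs.length := by
            rw [List.countP_eq_length]
            intro y hy
            simpa using hax.trans (hs.1 y hy)
          omega
        · simpa [hax] using h

/-- For `1 ≤ lam ≤ Z.card`, `a ≤ medSat util lam Z` iff at least `lam` items have
utility at least `a`. -/
private lemma le_medSat_iff {Q : Type*} (util : Q → ℕ) (lam : ℕ) (Z : Finset Q)
    (hlam : 1 ≤ lam) (hcard : lam ≤ Z.card) (a : ℕ) :
    a ≤ medSat util lam Z ↔ lam ≤ Z.val.countP (fun q => a ≤ util q) := by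
  unfold medSat
  rw [if_pos ⟨hlam, hcard⟩]
  set L := (Z.val.map util).sort (· ≤ ·) with hL
  have hlen : L.length = Z.card := by
    rw [hL, Multiset.length_sort, Multiset.card_map]; rfl
  have hidx : Z.card - lam < L.length := by omega
  have hsorted : L.Pairwise (· ≤ ·) := Multiset.pairwise_sort _ _
  rw [sorted_getD_le_iff L hsorted _ hidx a]
  have hcount : L.countP (fun x => a ≤ x) = Z.val.countP (fun q => a ≤ util q) := by
    have : (L : Multiset ℕ) = Z.val.map util := Multiset.sort_eq _ _
    calc L.countP (fun x => decide (a ≤ x))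
        = Multiset.countP (fun x => a ≤ x) (L : Multiset ℕ) := rfl
      _ = Multiset.countP (fun x => a ≤ x) (Z.val.map util) := by rw [this]
      _ = Z.val.countP (fun q => a ≤ util q) := by
          rw [Multiset.countP_map, Multiset.countP_eq_card_filter]
  rw [hcount, hlen]
  omega

private lemma medSat_pos_card {Q : Type*} (util : Q → ℕ) (lam : ℕ) (Z : Finset Q)
    (h : 0 < medSat util lam Z) : 1 ≤ lam ∧ lam ≤ Z.card := by
  by_contra hcon
  unfold medSat at h
  rw [if_neg hcon] at h
  exact absurd h (by simp)

/-- Correctness of the reduction from Diverse Knapsack to λ-median Utilitarian Knapsack: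
adding `l = λ - 1` new items (here `λ = l + 1`), each of cost 1, whose utilities strictly
exceed every original item's utility for every voter (and are strictly increasing among
themselves), and raising the budget to `b + l`, preserves yes-instances in both directions. -/
theorem stmt3 {P V : Type*} [Fintype P] [Fintype V] [DecidableEq P]
    (l : ℕ) (c : P → ℕ) (hc : ∀ p, 1 ≤ c p)
    (util : V → P → ℕ) (util' : V → P ⊕ Fin l → ℕ)
    (hagree : ∀ v p, util' v (Sum.inl p) = util v p)
    (hbig : ∀ (v : V) (j : Fin l) (p : P), util v p < util' v (Sum.inr j))
    (hmono : ∀ (v : V) (j j' : Fin l), j < j' → util' v (Sum.inr j) < util' v (Sum.inr j'))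
    (b tgt : ℕ) (htgt : 0 < tgt) :
    (∃ S : Finset P, (∑ p ∈ S, c p) ≤ b ∧ tgt ≤ ∑ v : V, S.sup (util v)) ↔
    (∃ S' : Finset (P ⊕ Fin l),
      (∑ q ∈ S', Sum.elim c (fun _ => 1) q) ≤ b + l ∧
      tgt ≤ ∑ v : V, medSat (util' v) (l + 1) S') := by
  constructor
  · rintro ⟨S, hcost, hsat⟩
    -- S is nonempty since tgt > 0
    rcases S.eq_empty_or_nonempty with rfl | hSne
    · exfalso
      have hz : ∑ v : V, (∅ : Finset P).sup (util v) = 0 := by simp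
      omega
    refine ⟨S.disjSum Finset.univ, ?_, ?_⟩
    · rw [Finset.sum_disjSum]
      simp only [Sum.elim_inl, Sum.elim_inr, Finset.sum_const, smul_eq_mul, mul_one]
      simp only [Finset.card_univ, Fintype.card_fin]
      omega
    · refine le_trans hsat (Finset.sum_le_sum fun v _ => ?_)
      obtain ⟨p₀, hp₀S, hp₀⟩ := Finset.exists_mem_eq_sup S hSne (util v)
      have hcard : l + 1 ≤ (S.disjSum (Finset.univ : Finset (Fin l))).card := by
        rw [Finset.card_disjSum, Finset.card_univ, Fintype.card_fin]
        have := Finset.card_pos.mpr hSne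
        omega
      rw [le_medSat_iff _ _ _ (by omega) hcard]
      -- at least l+1 elements have utility ≥ S.sup (util v):
      -- inl p₀ and all the inr j's
      have : Multiset.countP (fun q => S.sup (util v) ≤ util' v q)
          ((S.disjSum Finset.univ).val) =
          Multiset.countP (fun p => S.sup (util v) ≤ util' v (Sum.inl p)) S.val +
          Multiset.countP (fun j => S.sup (util v) ≤ util' v (Sum.inr j))
            (Finset.univ : Finset (Fin l)).val := by
        rw [Finset.val_disjSum, Multiset.disjSum, Multiset.countP_add, Multiset.countP_map,
          Multiset.countP_map, ← Multiset.countP_eq_card_filter, ← Multiset.countP_eq_card_filter]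
      rw [this]
      have h1 : 0 < Multiset.countP (fun p => S.sup (util v) ≤ util' v (Sum.inl p)) S.val :=
        Multiset.countP_pos.2 ⟨p₀, hp₀S, by simp [hagree, hp₀]⟩
      have h2 : Multiset.countP (fun j => S.sup (util v) ≤ util' v (Sum.inr j))
          (Finset.univ : Finset (Fin l)).val = l := by
        rw [Multiset.countP_eq_card_filter]
        have : Multiset.filter (fun j => S.sup (util v) ≤ util' v (Sum.inr j))
            (Finset.univ : Finset (Fin l)).val = (Finset.univ : Finset (Fin l)).val := by
          rw [Multiset.filter_eq_self]
          intro j _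
          exact le_of_lt (by rw [hp₀]; exact hbig v j p₀)
        rw [this]
        simp
      omega
  · rintro ⟨S', hcost, hsat⟩
    -- some voter has positive medSat, hence l + 1 ≤ S'.card
    have hv0 : ∃ v : V, 0 < medSat (util' v) (l + 1) S' := by
      by_contra hcon
      push_neg at hcon
      have : ∑ v : V, medSat (util' v) (l + 1) S' = 0 :=
        Finset.sum_eq_zero fun v _ => Nat.le_zero.mp (hcon v)
      omega
    obtain ⟨v₀, hv₀⟩ := hv0
    have hScard : l + 1 ≤ S'.card := (medSat_pos_card _ _ _ hv₀).2
    set S₀ := S'.toLeft with hS₀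
    set k := S'.toRight.card with hk
    have hkl : k ≤ l := by
      calc k ≤ (Finset.univ : Finset (Fin l)).card := Finset.card_le_univ _
        _ = l := by simp
    have hcards : S₀.card + k = S'.card := Finset.card_toLeft_add_card_toRight
    -- pick l - k items to discard
    obtain ⟨D, hDsub, hDcard⟩ : ∃ D ⊆ S₀, D.card = l - k :=
      Finset.exists_subset_card_eq (by omega)
    refine ⟨S₀ \ D, ?_, ?_⟩
    · -- cost bound
      have hsplit : (∑ q ∈ S', Sum.elim c (fun _ => 1) q) =
          (∑ p ∈ S₀, c p) + k := by
        conv_lhs => rw [← Finset.toLeft_disjSum_toRight (u := S')]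
        rw [Finset.sum_disjSum]
        simp
        rfl
      have hD : ∑ p ∈ (S₀ \ D), c p + ∑ p ∈ D, c p = ∑ p ∈ S₀, c p :=
        Finset.sum_sdiff hDsub
      have hDge : D.card ≤ ∑ p ∈ D, c p := by
        calc D.card = ∑ _p ∈ D, 1 := by simp
          _ ≤ ∑ p ∈ D, c p := Finset.sum_le_sum fun p _ => hc p
      omega
    · -- satisfaction bound
      refine le_trans hsat (Finset.sum_le_sum fun v _ => ?_)
      set m := medSat (util' v) (l + 1) S' with hm
      rcases Nat.eq_zero_or_pos m with hm0 | hmpos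
      · exact le_of_eq_of_le hm0 (Nat.zero_le _)
      have hcard' : l + 1 ≤ S'.card := hScard
      have hcnt : l + 1 ≤ S'.val.countP (fun q => m ≤ util' v q) :=
        (le_medSat_iff _ _ _ (by omega) hcard' m).mp le_rfl
      -- the filtered set
      set F := S'.filter (fun q => m ≤ util' v q) with hF
      have hFcard : l + 1 ≤ F.card := by
        have hval : F.val = S'.val.filter (fun q => m ≤ util' v q) := Finset.filter_val _ _
        have : F.card = S'.val.countP (fun q => m ≤ util' v q) := by
          rw [Finset.card_def, hval, ← Multiset.countP_eq_card_filter]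
        omega
      have hFL : F.toLeft.card + F.toRight.card = F.card :=
        Finset.card_toLeft_add_card_toRight
      have hFR : F.toRight.card ≤ k := by
        apply Finset.card_le_card
        exact Finset.toRight_subset_toRight (Finset.filter_subset _ _)
      have hFLcard : l + 1 - k ≤ F.toLeft.card := by omega
      -- F.toLeft has more elements than D, so some element avoids D
      have : ¬ F.toLeft ⊆ D := by
        intro hsub
        have := Finset.card_le_card hsub
        omega
      obtain ⟨p, hpF, hpD⟩ := Finset.not_subset.mp this
      have hpS₀ : p ∈ S₀ := by
        rw [hS₀, Finset.mem_toLeft]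
        have := Finset.mem_toLeft.mp hpF
        exact (Finset.mem_filter.mp this).1
      have hpm : m ≤ util v p := by
        have := Finset.mem_toLeft.mp hpF
        have := (Finset.mem_filter.mp this).2
        rwa [hagree] at this
      calc m ≤ util v p := hpm
        _ ≤ (S₀ \ D).sup (util v) :=
            Finset.le_sup (Finset.mem_sdiff.mpr ⟨hpS₀, hpD⟩)
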